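/- Let V be a finite-dimensional complex vector space and Λ(z) = Σ_{i=1}^{k} Λ_i z^{-i}, Λ'(z) = Σ_{i=1}^{k} Λ'_i z^{-i} two normal forms with the same top index k. If there exists g(z) = Σ_{i=0}^{k-1} g_i z^i ∈ G_k(V) (g_0 invertible) such that Σ_{i=0}^{k-l} (Λ_{l+i} g_i − g_i Λ'_{l+i}) = 0 for l = 1, …, k (i.e., g·Λ = Λ' under the coadjoint action), then there exists a ∈ GL(V) with a Λ_i a^{-1} = Λ'_i for all i = 1, …, k. -/

import Mathlib

open Polynomial LinearMap

section aux

variable {W : Type*} [AddCommGroup W] [Module ℂ W] [FiniteDimensional ℂ W]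

/-- aeval of `mulRight`. -/
lemma aeval_mulRight' (A : Module.End ℂ W) (p : ℂ[X]) :
    aeval (LinearMap.mulRight ℂ A) p = LinearMap.mulRight ℂ (aeval A p) := by
  induction p using Polynomial.induction_on' with
  | add p q hp hq =>
    rw [map_add, map_add, hp, hq]
    ext x
    simp [LinearMap.mulRight_apply, mul_add]
  | monomial n c =>
    rw [aeval_monomial, aeval_monomial]
    ext x
    simp [Module.End.mul_apply, LinearMap.pow_mulRight, LinearMap.mulRight_apply,
      Algebra.algebraMap_eq_smul_one, smul_mul_assoc, mul_smul_comm]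

lemma aeval_mulLeft' (A : Module.End ℂ W) (p : ℂ[X]) :
    aeval (LinearMap.mulLeft ℂ A) p = LinearMap.mulLeft ℂ (aeval A p) := by
  induction p using Polynomial.induction_on' with
  | add p q hp hq =>
    rw [map_add, map_add, hp, hq]
    ext x
    simp [LinearMap.mulLeft_apply, add_mul]
  | monomial n c =>
    rw [aeval_monomial, aeval_monomial]
    ext x
    simp [Module.End.mul_apply, LinearMap.pow_mulLeft, LinearMap.mulLeft_apply,
      Algebra.algebraMap_eq_smul_one, smul_mul_assoc, mul_smul_comm]

lemma mulLeft_isSemisimple {A : Module.End ℂ W} (hA : A.IsSemisimple) :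
    Module.End.IsSemisimple (LinearMap.mulLeft ℂ A : Module.End ℂ (Module.End ℂ W)) := by
  apply Module.End.isSemisimple_of_squarefree_aeval_eq_zero hA.minpoly_squarefree
  rw [aeval_mulLeft', minpoly.aeval]
  ext x; simp

lemma mulRight_isSemisimple {A : Module.End ℂ W} (hA : A.IsSemisimple) :
    Module.End.IsSemisimple (LinearMap.mulRight ℂ A : Module.End ℂ (Module.End ℂ W)) := by
  apply Module.End.isSemisimple_of_squarefree_aeval_eq_zero hA.minpoly_squarefree
  rw [aeval_mulRight', minpoly.aeval]
  ext x; simp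

/-- The adjoint action of a semisimple endomorphism is semisimple. -/
lemma ad_isSemisimple {A : Module.End ℂ W} (hA : A.IsSemisimple) :
    Module.End.IsSemisimple
      (LinearMap.mulLeft ℂ A - LinearMap.mulRight ℂ A : Module.End ℂ (Module.End ℂ W)) :=
  Module.End.IsSemisimple.sub_of_commute (LinearMap.commute_mulLeft_right A A)
    (mulLeft_isSemisimple hA) (mulRight_isSemisimple hA)

lemma ad_commute {A B : Module.End ℂ W} (h : Commute A B) :
    Commute (LinearMap.mulLeft ℂ A - LinearMap.mulRight ℂ A)
      (LinearMap.mulLeft ℂ B - LinearMap.mulRight ℂ B) := by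
  have hLL : Commute (LinearMap.mulLeft ℂ A) (LinearMap.mulLeft ℂ B) := by
    unfold Commute SemiconjBy
    rw [Module.End.mul_eq_comp, Module.End.mul_eq_comp, ← LinearMap.mulLeft_mul,
      ← LinearMap.mulLeft_mul, h.eq]
  have hRR : Commute (LinearMap.mulRight ℂ A) (LinearMap.mulRight ℂ B) := by
    unfold Commute SemiconjBy
    rw [Module.End.mul_eq_comp, Module.End.mul_eq_comp, ← LinearMap.mulRight_mul,
      ← LinearMap.mulRight_mul, h.eq]
  exact Commute.sub_left (Commute.sub_right hLL (LinearMap.commute_mulLeft_right A B))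
    (Commute.sub_right (LinearMap.commute_mulLeft_right B A).symm hRR)

/-- For a semisimple endomorphism, kernel and range are complementary. -/
lemma isCompl_ker_range_of_isSemisimple {f : Module.End ℂ W} (hf : f.IsSemisimple) :
    IsCompl (LinearMap.ker f) (LinearMap.range f) := by
  have hker : LinearMap.ker f ∈ f.invtSubmodule := by
    rw [Module.End.mem_invtSubmodule _]
    intro x hx
    simp only [Submodule.mem_comap]
    simp only [LinearMap.mem_ker] at hx ⊢
    rw [hx, map_zero]
  obtain ⟨q, hq, hcompl⟩ := Module.End.isSemisimple_iff.mp hf _ hker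
  have hdisj : Disjoint (LinearMap.ker f) (LinearMap.range f) := by
    rw [Submodule.disjoint_def]
    rintro x hx ⟨y, rfl⟩
    -- y decomposes along ker ⊔ q = ⊤
    have htop : LinearMap.ker f ⊔ q = ⊤ := hcompl.codisjoint.eq_top
    have hy : y ∈ LinearMap.ker f ⊔ q := htop ▸ Submodule.mem_top
    obtain ⟨u, hu, w, hw, rfl⟩ := Submodule.mem_sup.mp hy
    have hfy : f (u + w) = f w := by
      rw [map_add, LinearMap.mem_ker.mp hu, zero_add]
    have hfwq : f w ∈ q := (Module.End.mem_invtSubmodule _).mp hq hw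
    have hfwk : f w ∈ LinearMap.ker f := by
      rw [LinearMap.mem_ker]
      rw [hfy] at hx
      exact hx
    have : f w ∈ LinearMap.ker f ⊓ q := ⟨hfwk, hfwq⟩
    rw [hcompl.disjoint.eq_bot] at this
    rw [hfy]
    simpa using this
  refine ⟨hdisj, codisjoint_iff.mpr ?_⟩
  apply Submodule.eq_top_of_finrank_eq
  have h1 := Submodule.finrank_sup_add_finrank_inf_eq (LinearMap.ker f) (LinearMap.range f)
  rw [hdisj.eq_bot] at h1
  simp only [finrank_bot, add_zero] at h1
  have h2 := LinearMap.finrank_range_add_finrank_ker f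
  omega

/-- Key lemma: if `x` is killed by a commuting family of semisimple endomorphisms and lies in
the sum of their ranges, then `x = 0`. -/
lemma eq_zero_of_ker_of_sum_range {ι : Type*} (s : Finset ι) (T : ι → Module.End ℂ W)
    (hss : ∀ i ∈ s, (T i).IsSemisimple)
    (hcomm : ∀ i ∈ s, ∀ j ∈ s, Commute (T i) (T j)) :
    ∀ (x : W) (y : ι → W), (∀ i ∈ s, T i x = 0) → x = ∑ i ∈ s, T i (y i) → x = 0 := by
  classical
  induction s using Finset.induction_on with
  | empty => intro x y _ hx; simpa using hx
  | @insert a s ha ih =>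
    intro x y hker hx
    have hTa : (T a).IsSemisimple := hss a (Finset.mem_insert_self a s)
    have hcompl := isCompl_ker_range_of_isSemisimple hTa
    have htop : LinearMap.ker (T a) ⊔ LinearMap.range (T a) = ⊤ := hcompl.codisjoint.eq_top
    -- projection onto ker (T a) along range (T a)
    let π : W →ₗ[ℂ] LinearMap.ker (T a) :=
      Submodule.projectionOnto _ _ hcompl
    let p : Module.End ℂ W := (LinearMap.ker (T a)).subtype ∘ₗ π
    have hpk : ∀ v ∈ LinearMap.ker (T a), p v = v := by
      intro v hv
      simp only [p, LinearMap.comp_apply]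
      have : (⟨v, hv⟩ : LinearMap.ker (T a)) = π v := by
        rw [Submodule.linearProjOfIsCompl_apply_left hcompl ⟨v, hv⟩]
      rw [← this]
      rfl
    have hpr : ∀ v ∈ LinearMap.range (T a), p v = 0 := by
      intro v hv
      simp only [p, LinearMap.comp_apply]
      rw [Submodule.linearProjOfIsCompl_apply_right hcompl ⟨v, hv⟩]
      simp
    have hpcomm : ∀ i ∈ s, ∀ v, p (T i v) = T i (p v) := by
      intro i hi v
      have hcai : Commute (T a) (T i) :=
        hcomm a (Finset.mem_insert_self a s) i (Finset.mem_insert_of_mem hi)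
      have hv : v ∈ LinearMap.ker (T a) ⊔ LinearMap.range (T a) := htop ▸ Submodule.mem_top
      obtain ⟨u, hu, w, hw, rfl⟩ := Submodule.mem_sup.mp hv
      have hcomm' : ∀ z, T a (T i z) = T i (T a z) := fun z => by
        rw [← Module.End.mul_apply, hcai.eq, Module.End.mul_apply]
      have hTiu : T i u ∈ LinearMap.ker (T a) := by
        rw [LinearMap.mem_ker, hcomm', LinearMap.mem_ker.mp hu, map_zero]
      have hTiw : T i w ∈ LinearMap.range (T a) := by
        obtain ⟨z, rfl⟩ := hw
        exact ⟨T i z, hcomm' z⟩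
      have e1 : p (T i (u + w)) = T i u := by
        rw [map_add (T i), map_add p, hpk _ hTiu, hpr _ hTiw, add_zero]
      have e2 : T i (p (u + w)) = T i u := by
        rw [map_add p, hpk _ hu, hpr _ hw, add_zero]
      rw [e1, e2]
    have hxk : x ∈ LinearMap.ker (T a) :=
      LinearMap.mem_ker.mpr (hker a (Finset.mem_insert_self a s))
    have hx' : x = ∑ i ∈ s, T i (p (y i)) := by
      have h1 : p x = x := hpk x hxk
      rw [Finset.sum_insert ha] at hx
      calc x = p x := h1.symm
        _ = p (T a (y a)) + ∑ i ∈ s, p (T i (y i)) := by rw [hx, map_add, map_sum]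
        _ = ∑ i ∈ s, T i (p (y i)) := by
            rw [hpr _ ⟨y a, rfl⟩, zero_add]
            exact Finset.sum_congr rfl fun i hi => hpcomm i hi (y i)
    exact ih (fun i hi => hss i (Finset.mem_insert_of_mem hi))
      (fun i hi j hj => hcomm i (Finset.mem_insert_of_mem hi) j (Finset.mem_insert_of_mem hj))
      x (fun i => p (y i)) (fun i hi => hker i (Finset.mem_insert_of_mem hi)) hx'

end aux

/-- two normal forms `Λ(z) = Σ_{i=1}^k Λ_i z^{-i}`, `Λ'(z) = Σ Λ'_i z^{-i}`
(coefficients pairwise commuting, `Λ_2,…,Λ_k` and `Λ'_2,…,Λ'_k` semisimple) lying in the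
same `G_k(V)`-coadjoint orbit (i.e. related by some `g(z) = Σ_{i<k} g_i z^i` with `g_0`
invertible via `Σ_{i=0}^{k-l} (Λ_{l+i} g_i − g_i Λ'_{l+i}) = 0` for `l = 1,…,k`) are
conjugate by a single element `a ∈ GL(V)`. -/
theorem stmt14
    (V : Type*) [AddCommGroup V] [Module ℂ V] [FiniteDimensional ℂ V]
    (k : ℕ) (hk : 0 < k) (Λ Λ' : ℕ → Module.End ℂ V)
    (hc : ∀ i j, 1 ≤ i → i ≤ k → 1 ≤ j → j ≤ k → Commute (Λ i) (Λ j))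
    (hc' : ∀ i j, 1 ≤ i → i ≤ k → 1 ≤ j → j ≤ k → Commute (Λ' i) (Λ' j))
    (hs : ∀ i, 2 ≤ i → i ≤ k → (Λ i).IsSemisimple)
    (hs' : ∀ i, 2 ≤ i → i ≤ k → (Λ' i).IsSemisimple)
    (g : ℕ → Module.End ℂ V) (hg0 : IsUnit (g 0))
    (hrel : ∀ l, 1 ≤ l → l ≤ k →
      ∑ i ∈ Finset.range (k - l + 1), (Λ (l + i) * g i - g i * Λ' (l + i)) = 0) :
    ∃ a : (Module.End ℂ V)ˣ, ∀ i, 1 ≤ i → i ≤ k →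
      (a : Module.End ℂ V) * Λ i * (↑a⁻¹ : Module.End ℂ V) = Λ' i := by
  set u := hg0.unit with hu
  have hu0 : (u : Module.End ℂ V) = g 0 := hg0.unit_spec
  have hlr : (↑u⁻¹ : Module.End ℂ V) * g 0 = 1 := by rw [← hu0]; exact u.inv_mul
  have hrl' : g 0 * (↑u⁻¹ : Module.End ℂ V) = 1 := by rw [← hu0]; exact u.mul_inv
  have key : ∀ m l, 1 ≤ l → l ≤ k → k - l ≤ m → Λ l * g 0 = g 0 * Λ' l := by
    intro m
    induction m with
    | zero =>
      intro l h1 h2 h3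
      have h := hrel l h1 h2
      rw [show k - l = 0 from by omega, Finset.sum_range_one, add_zero] at h
      exact sub_eq_zero.mp h
    | succ m ih =>
      intro l h1 h2 h3
      by_cases hm : k - l ≤ m
      · exact ih l h1 h2 hm
      have h := hrel l h1 h2
      rw [Finset.sum_range_succ'] at h
      -- abbreviations
      set Gi : Module.End ℂ V := (↑u⁻¹ : Module.End ℂ V) with hGi
      -- induction hypothesis for higher indices
      have IH : ∀ i, i < k - l → Λ (l + i + 1) * g 0 = g 0 * Λ' (l + i + 1) := by
        intro i hi
        exact ih (l + i + 1) (by omega) (by omega) (by omega)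
      have IH' : ∀ i, i < k - l → Gi * Λ (l + i + 1) = Λ' (l + i + 1) * Gi := by
        intro i hi
        have := IH i hi
        calc Gi * Λ (l + i + 1) = Gi * Λ (l + i + 1) * (g 0 * Gi) := by rw [hrl', mul_one]
          _ = Gi * (Λ (l + i + 1) * g 0) * Gi := by noncomm_ring
          _ = Gi * (g 0 * Λ' (l + i + 1)) * Gi := by rw [this]
          _ = (Gi * g 0) * Λ' (l + i + 1) * Gi := by noncomm_ring
          _ = Λ' (l + i + 1) * Gi := by rw [hlr, one_mul]
      -- rewrite each summand as a commutator times g 0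
      have hsum : ∀ i ∈ Finset.range (k - l),
          Λ (l + (i + 1)) * g (i + 1) - g (i + 1) * Λ' (l + (i + 1)) =
          ((LinearMap.mulLeft ℂ (Λ (l + i + 1)) - LinearMap.mulRight ℂ (Λ (l + i + 1)))
            (g (i + 1) * Gi)) * g 0 := by
        intro i hi
        rw [Finset.mem_range] at hi
        have h1' : l + (i + 1) = l + i + 1 := by omega
        rw [h1']
        have hI := IH' i hi
        simp only [LinearMap.sub_apply, LinearMap.mulLeft_apply, LinearMap.mulRight_apply]
        have : g (i + 1) * Λ' (l + i + 1) = g (i + 1) * Gi * Λ (l + i + 1) * g 0 := by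
          symm
          calc g (i + 1) * Gi * Λ (l + i + 1) * g 0
              = g (i + 1) * (Gi * Λ (l + i + 1)) * g 0 := by noncomm_ring
            _ = g (i + 1) * (Λ' (l + i + 1) * Gi) * g 0 := by rw [hI]
            _ = g (i + 1) * Λ' (l + i + 1) * (Gi * g 0) := by noncomm_ring
            _ = g (i + 1) * Λ' (l + i + 1) := by rw [hlr, mul_one]
        rw [this]
        calc Λ (l + i + 1) * g (i + 1) - g (i + 1) * Gi * Λ (l + i + 1) * g 0
            = Λ (l + i + 1) * (g (i + 1) * (Gi * g 0)) - g (i + 1) * Gi * Λ (l + i + 1) * g 0 := by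
              rw [hlr, mul_one]
          _ = (Λ (l + i + 1) * (g (i + 1) * Gi) - g (i + 1) * Gi * Λ (l + i + 1)) * g 0 := by noncomm_ring
      -- the element E
      set E : Module.End ℂ V := (Λ l * g 0 - g 0 * Λ' l) * Gi with hE
      have hEsum : E = ∑ i ∈ Finset.range (k - l),
          (LinearMap.mulLeft ℂ (Λ (l + i + 1)) - LinearMap.mulRight ℂ (Λ (l + i + 1)))
            (-(g (i + 1) * Gi)) := by
        have hsum' : ∑ i ∈ Finset.range (k - l),
            (Λ (l + (i + 1)) * g (i + 1) - g (i + 1) * Λ' (l + (i + 1))) =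
            (∑ i ∈ Finset.range (k - l),
              (LinearMap.mulLeft ℂ (Λ (l + i + 1)) - LinearMap.mulRight ℂ (Λ (l + i + 1)))
                (g (i + 1) * Gi)) * g 0 := by
          rw [Finset.sum_mul]
          exact Finset.sum_congr rfl hsum
        have hD : Λ l * g 0 - g 0 * Λ' l =
            -((∑ i ∈ Finset.range (k - l),
              (LinearMap.mulLeft ℂ (Λ (l + i + 1)) - LinearMap.mulRight ℂ (Λ (l + i + 1)))
                (g (i + 1) * Gi)) * g 0) := by
          rw [← hsum']
          refine eq_neg_of_add_eq_zero_right ?_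
          simpa using h
        rw [hE, hD, neg_mul, mul_assoc, hrl', mul_one]
        simp only [map_neg, Finset.sum_neg_distrib]
      -- E commutes with all the higher Λ's : T i E = 0
      have hEker : ∀ i ∈ Finset.range (k - l),
          (LinearMap.mulLeft ℂ (Λ (l + i + 1)) - LinearMap.mulRight ℂ (Λ (l + i + 1))) E = 0 := by
        intro i hi
        rw [Finset.mem_range] at hi
        simp only [LinearMap.sub_apply, LinearMap.mulLeft_apply, LinearMap.mulRight_apply]
        rw [sub_eq_zero]
        set j := l + i + 1
        have hj1 : 1 ≤ j := by omega
        have hjk : j ≤ k := by omega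
        have hcj : Λ j * Λ l = Λ l * Λ j := (hc j l hj1 hjk h1 h2).eq
        have hcj' : Λ' j * Λ' l = Λ' l * Λ' j := (hc' j l hj1 hjk h1 h2).eq
        have hIH := IH i hi  -- Λ j * g 0 = g 0 * Λ' j
        have hIH' := IH' i hi -- Gi * Λ j = Λ' j * Gi
        have hE' : E = Λ l - g 0 * Λ' l * Gi := by
          rw [hE, sub_mul, mul_assoc (Λ l) (g 0) Gi, hrl', mul_one]
        rw [hE']
        calc Λ j * (Λ l - g 0 * Λ' l * Gi)
            = Λ j * Λ l - (Λ j * g 0) * Λ' l * Gi := by noncomm_ring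
          _ = Λ l * Λ j - (g 0 * Λ' j) * Λ' l * Gi := by rw [hcj, hIH]
          _ = Λ l * Λ j - g 0 * (Λ' j * Λ' l) * Gi := by noncomm_ring
          _ = Λ l * Λ j - g 0 * (Λ' l * Λ' j) * Gi := by rw [hcj']
          _ = Λ l * Λ j - g 0 * Λ' l * (Λ' j * Gi) := by noncomm_ring
          _ = Λ l * Λ j - g 0 * Λ' l * (Gi * Λ j) := by rw [← hIH']
          _ = (Λ l - g 0 * Λ' l * Gi) * Λ j := by noncomm_ring
      -- apply the key lemma
      have hE0 : E = 0 := by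
        apply eq_zero_of_ker_of_sum_range (Finset.range (k - l))
          (fun i => LinearMap.mulLeft ℂ (Λ (l + i + 1)) - LinearMap.mulRight ℂ (Λ (l + i + 1)))
          ?_ ?_ E (fun i => -(g (i + 1) * Gi)) hEker hEsum
        · intro i hi
          rw [Finset.mem_range] at hi
          exact ad_isSemisimple (hs (l + i + 1) (by omega) (by omega))
        · intro i hi j hj
          rw [Finset.mem_range] at hi hj
          exact ad_commute (hc (l + i + 1) (l + j + 1) (by omega) (by omega) (by omega) (by omega))
      have : Λ l * g 0 - g 0 * Λ' l = 0 := by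
        have := congrArg (· * g 0) hE0
        simpa [hE, mul_assoc, hlr] using this
      exact sub_eq_zero.mp this
  refine ⟨u⁻¹, fun i h1 h2 => ?_⟩
  have hkey := key (k - i) i h1 h2 le_rfl
  rw [inv_inv, hu0]
  calc (↑u⁻¹ : Module.End ℂ V) * Λ i * g 0 = (↑u⁻¹ : Module.End ℂ V) * (Λ i * g 0) := by
        rw [mul_assoc]
    _ = (↑u⁻¹ : Module.End ℂ V) * (g 0 * Λ' i) := by rw [hkey]
    _ = ((↑u⁻¹ : Module.End ℂ V) * g 0) * Λ' i := by rw [mul_assoc]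
    _ = Λ' i := by rw [hlr, one_mul]
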